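/- Let s ≥ 1, d ≥ 3, and let f be a nonzero homogeneous polynomial of degree d in the variables z₀, …, z_s over ℂ. Suppose all polar quadrics of f coincide; that is, suppose there is a nonzero homogeneous quadratic polynomial q such that for all vectors b₁, …, b_{d−2} ∈ ℂ^{s+1} the iterated directional derivative ∂_{b₁}⋯∂_{b_{d−2}} f is a scalar multiple of q. Then there exist a nonzero linear form ℓ and a nonzero constant c ∈ ℂ with f = c·ℓ^d, and every nonzero polar quadric of f is a nonzero scalar multiple of ℓ². (Geometrically: the hypersurface V = {f = 0} is a hyperplane H counted with multiplicity d, and the common polar quadric is 2H.) -/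

import Mathlib

/-- The directional derivative `∂_b = Σᵢ bᵢ ∂/∂zᵢ` of a multivariate polynomial. -/
noncomputable def dirDeriv {g : ℕ} (b : Fin g → ℂ) (f : MvPolynomial (Fin g) ℂ) :
    MvPolynomial (Fin g) ℂ :=
  ∑ i, b i • MvPolynomial.pderiv i f

namespace PolarAux

open MvPolynomial

variable {g : ℕ}

/-- Sum over all of `Fin g` equals the `Finsupp.degree`. -/
lemma sum_fin_eq_degree (m : Fin g →₀ ℕ) : ∑ i, m i = m.degree :=
  (Finset.sum_subset (Finset.subset_univ _)
    (fun _ _ hx => Finsupp.notMem_support_iff.mp hx)).symm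

lemma isHomog_iff {p : MvPolynomial (Fin g) ℂ} {n : ℕ} :
    p.IsHomogeneous n ↔ ∀ m : Fin g →₀ ℕ, coeff m p ≠ 0 → ∑ i, m i = n := by
  constructor
  · intro h m hm
    rw [sum_fin_eq_degree, Finsupp.degree_eq_weight_one]
    exact h hm
  · intro h m hm
    change Finsupp.weight (fun _ => 1) m = n
    rw [← Finsupp.degree_eq_weight_one, ← sum_fin_eq_degree]
    exact h m hm

lemma homog_zero_eq_C {p : MvPolynomial (Fin g) ℂ} (hp : p.IsHomogeneous 0) :
    p = C (coeff 0 p) := by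
  ext m
  rcases eq_or_ne m 0 with rfl | hm
  · simp
  · rw [coeff_C, if_neg (by exact fun h => hm h.symm)]
    by_contra hc
    have h0 := isHomog_iff.mp hp m hc
    apply hm
    ext i
    exact Finset.sum_eq_zero_iff.mp h0 i (Finset.mem_univ i)

lemma pderiv_isHomogeneous {p : MvPolynomial (Fin g) ℂ} {n : ℕ}
    (hp : p.IsHomogeneous n) (j : Fin g) :
    (pderiv j p).IsHomogeneous (n - 1) := by
  rw [p.as_sum, map_sum]
  apply IsHomogeneous.sum
  intro m hm
  rw [pderiv_monomial]
  by_cases h0 : m j = 0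
  · rw [h0, Nat.cast_zero, mul_zero, map_zero]
    exact isHomogeneous_zero _ _ _
  · apply isHomogeneous_monomial
    rw [← sum_fin_eq_degree]
    have hmem : j ∈ Finset.univ := Finset.mem_univ (α := Fin g) j
    have hsum := isHomog_iff.mp hp m (mem_support_iff.mp hm)
    rw [← Finset.sum_erase_add Finset.univ (fun i => m i) hmem] at hsum
    rw [← Finset.sum_erase_add Finset.univ
      (fun i => ((m - Finsupp.single j 1 : Fin g →₀ ℕ)) i) hmem]
    have key : ∀ i ∈ Finset.univ.erase j,
        ((m - Finsupp.single j 1 : Fin g →₀ ℕ)) i = m i := by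
      intro i hi
      rw [Finsupp.tsub_apply,
        Finsupp.single_eq_of_ne' (Ne.symm (Finset.ne_of_mem_erase hi)), Nat.sub_zero]
    rw [Finset.sum_congr rfl key]
    have hj : ((m - Finsupp.single j 1 : Fin g →₀ ℕ)) j = m j - 1 := by
      rw [Finsupp.tsub_apply, Finsupp.single_eq_same]
    rw [hj]
    set A := ∑ i ∈ Finset.univ.erase j, m i with hA
    omega

/-- Euler's identity for homogeneous multivariate polynomials. -/
lemma euler {p : MvPolynomial (Fin g) ℂ} {n : ℕ} (hp : p.IsHomogeneous n) :
    ∑ i, (X i : MvPolynomial (Fin g) ℂ) * pderiv i p = (n : ℂ) • p := by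
  have key : ∀ (m : Fin g →₀ ℕ) (c : ℂ) (i : Fin g),
      (X i : MvPolynomial (Fin g) ℂ) * pderiv i (monomial m c)
        = (m i : ℂ) • monomial m c := by
    intro m c i
    rw [pderiv_monomial]
    by_cases h0 : m i = 0
    · simp [h0]
    · rw [X, monomial_mul, one_mul, smul_monomial]
      rw [add_tsub_cancel_of_le (Finsupp.single_le_iff.mpr (Nat.one_le_iff_ne_zero.mpr h0))]
      rw [mul_comm, smul_eq_mul]
  conv_lhs => rw [p.as_sum]
  simp_rw [map_sum, Finset.mul_sum]
  rw [Finset.sum_comm]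
  conv_rhs => rw [p.as_sum, Finset.smul_sum]
  refine Finset.sum_congr rfl fun m hm => ?_
  rw [Finset.sum_congr rfl (fun i _ => key m _ i), ← Finset.sum_smul, ← Nat.cast_sum,
    isHomog_iff.mp hp m (mem_support_iff.mp hm)]

lemma eq_zero_of_pderiv {p : MvPolynomial (Fin g) ℂ} {n : ℕ} (hn : n ≠ 0)
    (hp : p.IsHomogeneous n) (h : ∀ i, pderiv i p = 0) : p = 0 := by
  have he := euler hp
  rw [Finset.sum_congr rfl (fun i _ => by rw [h i, mul_zero]), Finset.sum_const_zero] at he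
  have := he.symm
  rw [smul_eq_zero] at this
  rcases this with h1 | h2
  · exact absurd (by simpa using h1 : n = 0) hn
  · exact h2

lemma exists_pderiv_ne_zero {p : MvPolynomial (Fin g) ℂ} {n : ℕ} (hn : n ≠ 0)
    (hp : p.IsHomogeneous n) (h : p ≠ 0) : ∃ i, pderiv i p ≠ 0 := by
  by_contra hc
  push_neg at hc
  exact h (eq_zero_of_pderiv hn hp hc)

lemma pderiv_comm (i j : Fin g) (p : MvPolynomial (Fin g) ℂ) :
    pderiv i (pderiv j p) = pderiv j (pderiv i p) := by
  induction p using MvPolynomial.induction_on' with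
  | add p q hp hq => rw [map_add, map_add, hp, hq, map_add, map_add]
  | monomial s a =>
    rcases eq_or_ne i j with rfl | hij
    · rfl
    · simp only [pderiv_monomial]
      have e1 : ((s - Finsupp.single j 1 : Fin g →₀ ℕ)) i = s i := by
        rw [Finsupp.tsub_apply, Finsupp.single_eq_of_ne' (Ne.symm hij), Nat.sub_zero]
      have e2 : ((s - Finsupp.single i 1 : Fin g →₀ ℕ)) j = s j := by
        rw [Finsupp.tsub_apply, Finsupp.single_eq_of_ne' hij, Nat.sub_zero]
      rw [e1, e2, tsub_right_comm]
      ring_nf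


lemma linear_eq_sum {L : MvPolynomial (Fin g) ℂ} (hL1 : L.IsHomogeneous 1) :
    ∑ j, (coeff 0 (pderiv j L)) • (X j : MvPolynomial (Fin g) ℂ) = L := by
  have he := euler hL1
  rw [Nat.cast_one, one_smul] at he
  conv_rhs => rw [← he]
  refine Finset.sum_congr rfl fun j _ => ?_
  have h0 : (pderiv j L).IsHomogeneous 0 := by simpa using pderiv_isHomogeneous hL1 j
  conv_rhs => rw [homog_zero_eq_C h0]
  rw [mul_comm, C_mul']

lemma prop_rel {L : MvPolynomial (Fin g) ℂ} (hL1 : L.IsHomogeneous 1) (hLne : L ≠ 0)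
    (c : Fin g → ℂ)
    (hrel : ∀ i j, c i • pderiv j L = c j • pderiv i L) :
    ∃ t : ℂ, ∑ i, c i • (X i : MvPolynomial (Fin g) ℂ) = t • L := by
  obtain ⟨i₁, hi₁⟩ := exists_pderiv_ne_zero one_ne_zero hL1 hLne
  set l : Fin g → ℂ := fun j => coeff 0 (pderiv j L) with hl
  have hC : ∀ j, pderiv j L = C (l j) := fun j =>
    homog_zero_eq_C (by simpa using pderiv_isHomogeneous hL1 j)
  have hl1 : l i₁ ≠ 0 := fun hz => hi₁ (by rw [hC i₁, hz, map_zero])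
  have hc : ∀ j, c j = (c i₁ / l i₁) * l j := by
    intro j
    have hr := hrel i₁ j
    rw [hC j, hC i₁, ← C_mul', ← C_mul', ← map_mul, ← map_mul] at hr
    have := C_injective (Fin g) ℂ hr
    field_simp
    linear_combination -this
  refine ⟨c i₁ / l i₁, ?_⟩
  calc ∑ i, c i • (X i : MvPolynomial (Fin g) ℂ)
      = ∑ i, ((c i₁ / l i₁) * l i) • (X i : MvPolynomial (Fin g) ℂ) := by
        exact Finset.sum_congr rfl fun i _ => by rw [← hc i]
    _ = (c i₁ / l i₁) • ∑ i, l i • (X i : MvPolynomial (Fin g) ℂ) := by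
        rw [Finset.smul_sum]
        exact Finset.sum_congr rfl fun i _ => by rw [smul_smul]
    _ = (c i₁ / l i₁) • L := by rw [linear_eq_sum hL1]

lemma smul_pderiv_cancel {L : MvPolynomial (Fin g) ℂ} (hLne : L ≠ 0) {n : ℕ} (hn : n ≠ 0)
    {a b : ℂ} {i j : Fin g}
    (h : a • pderiv j (L ^ n) = b • pderiv i (L ^ n)) :
    a • pderiv j L = b • pderiv i L := by
  rw [pderiv_pow, pderiv_pow] at h
  have hcast : ((n : MvPolynomial (Fin g) ℂ)) = C ((n : ℂ)) :=
    (map_natCast (C : ℂ →+* MvPolynomial (Fin g) ℂ) n).symm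
  have hfac : ((n : MvPolynomial (Fin g) ℂ)) * L ^ (n-1) ≠ 0 := by
    apply mul_ne_zero
    · rw [hcast]
      intro hcz
      have : (n : ℂ) = 0 := C_injective (Fin g) ℂ (by rw [hcz, map_zero])
      exact hn (Nat.cast_eq_zero.mp this)
    · exact pow_ne_zero _ hLne
  apply mul_left_cancel₀ hfac
  rw [mul_smul_comm, mul_smul_comm]
  exact h

lemma key_induction {L : MvPolynomial (Fin g) ℂ} (hL1 : L.IsHomogeneous 1) (hLne : L ≠ 0) :
    ∀ n : ℕ, 2 ≤ n → ∀ p : MvPolynomial (Fin g) ℂ, p.IsHomogeneous n →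
      (∀ l : List (Fin g), l.length = n - 2 →
        ∃ c : ℂ, l.foldr (fun i q => pderiv i q) p = c • L ^ 2) →
      ∃ c : ℂ, p = c • L ^ n := by
  intro n hn
  induction n, hn using Nat.le_induction with
  | base =>
    intro p _ h
    obtain ⟨c, hc⟩ := h [] rfl
    exact ⟨c, hc⟩
  | succ n hn ih =>
    intro p hp h
    have hder : ∀ i, ∃ c : ℂ, pderiv i p = c • L ^ n := by
      intro i
      refine ih (pderiv i p) ?_ ?_
      · have := pderiv_isHomogeneous hp i
        simpa using this
      · intro l hl
        have h2 := h (l ++ [i]) (by simp [hl]; omega)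
        rw [List.foldr_append] at h2
        simpa using h2
    choose c hc using hder
    have hrel : ∀ i j, c i • pderiv j L = c j • pderiv i L := by
      intro i j
      apply smul_pderiv_cancel hLne (by omega : n ≠ 0)
      rw [← Derivation.map_smul, ← Derivation.map_smul, ← hc i, ← hc j]
      exact pderiv_comm j i p
    obtain ⟨t, ht⟩ := prop_rel hL1 hLne c hrel
    have he := euler hp
    have hcalc : ∑ i, (X i : MvPolynomial (Fin g) ℂ) * pderiv i p = t • L ^ (n+1) := by
      calc ∑ i, (X i : MvPolynomial (Fin g) ℂ) * pderiv i p
          = ∑ i, (c i • (X i : MvPolynomial (Fin g) ℂ)) * L ^ n := by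
            refine Finset.sum_congr rfl fun i _ => ?_
            rw [hc i, mul_smul_comm, smul_mul_assoc]
        _ = (t • L) * L ^ n := by rw [← Finset.sum_mul, ht]
        _ = t • L ^ (n+1) := by rw [smul_mul_assoc, ← pow_succ']
    rw [hcalc] at he
    have hne : ((n+1:ℕ) : ℂ) ≠ 0 := Nat.cast_ne_zero.mpr (by omega)
    refine ⟨t / ((n+1 : ℕ) : ℂ), ?_⟩
    have hstep : p = (((n+1:ℕ):ℂ))⁻¹ • (((n+1:ℕ):ℂ) • p) := by
      rw [smul_smul, inv_mul_cancel₀ hne, one_smul]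
    rw [hstep, ← he, smul_smul, inv_mul_eq_div]

lemma q_is_square {q h : MvPolynomial (Fin g) ℂ} (hq2 : q.IsHomogeneous 2) (hq : q ≠ 0)
    (c : Fin g → ℂ) (hc : ∀ i, pderiv i h = c i • q) (i₀ : Fin g) (h0 : c i₀ ≠ 0) :
    ∃ (m : MvPolynomial (Fin g) ℂ) (lam : ℂ),
      m.IsHomogeneous 1 ∧ m ≠ 0 ∧ lam ≠ 0 ∧ q = lam • m ^ 2 := by
  have rel1 : ∀ i j, c i • pderiv j q = c j • pderiv i q := by
    intro i j
    rw [← Derivation.map_smul, ← Derivation.map_smul, ← hc i, ← hc j]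
    exact pderiv_comm j i h
  set m := pderiv i₀ q with hm
  have hm1 : m.IsHomogeneous 1 := by simpa using pderiv_isHomogeneous hq2 i₀
  have hmne : m ≠ 0 := by
    intro hzero
    apply hq
    apply eq_zero_of_pderiv (by omega : (2:ℕ) ≠ 0) hq2
    intro j
    have hr := rel1 i₀ j
    rw [← hm, hzero, smul_zero] at hr
    rcases smul_eq_zero.mp hr with h1 | h2
    · exact absurd h1 h0
    · exact h2
  have hpd : ∀ j, pderiv j q = (c j / c i₀) • m := by
    intro j
    have hr := rel1 i₀ j
    calc pderiv j q = (c i₀)⁻¹ • (c i₀ • pderiv j q) := by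
          rw [smul_smul, inv_mul_cancel₀ h0, one_smul]
      _ = (c i₀)⁻¹ • (c j • m) := by rw [hr]
      _ = (c j / c i₀) • m := by rw [smul_smul, inv_mul_eq_div]
  have rel2 : ∀ j k, (c j / c i₀) • pderiv k m = (c k / c i₀) • pderiv j m := by
    intro j k
    have hcomm := pderiv_comm k j q
    rw [hpd j, hpd k, Derivation.map_smul, Derivation.map_smul] at hcomm
    exact hcomm
  obtain ⟨t, ht⟩ := prop_rel hm1 hmne _ rel2
  have he := euler hq2
  have hcalc : ∑ i, (X i : MvPolynomial (Fin g) ℂ) * pderiv i q = t • m ^ 2 := by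
    calc ∑ i, (X i : MvPolynomial (Fin g) ℂ) * pderiv i q
        = ∑ i, ((c i / c i₀) • (X i : MvPolynomial (Fin g) ℂ)) * m := by
          refine Finset.sum_congr rfl fun i _ => ?_
          rw [hpd i, mul_smul_comm, smul_mul_assoc]
      _ = (t • m) * m := by rw [← Finset.sum_mul, ht]
      _ = t • m ^ 2 := by rw [smul_mul_assoc, sq]
  rw [hcalc] at he
  have h2 : ((2:ℕ):ℂ) ≠ 0 := Nat.cast_ne_zero.mpr (by omega)
  have hq_eq : q = (t / 2) • m ^ 2 := by
    calc q = (((2:ℕ):ℂ))⁻¹ • (((2:ℕ):ℂ) • q) := by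
          rw [smul_smul, inv_mul_cancel₀ h2, one_smul]
      _ = (((2:ℕ):ℂ))⁻¹ • (t • m ^ 2) := by rw [← he]
      _ = (t / 2) • m ^ 2 := by
          rw [smul_smul]
          congr 1
          push_cast
          ring
  refine ⟨m, t / 2, hm1, hmne, ?_, hq_eq⟩
  intro htz
  apply hq
  rw [hq_eq, htz]
  simp

lemma dirDeriv_single (i : Fin g) (p : MvPolynomial (Fin g) ℂ) :
    dirDeriv (Pi.single i 1) p = pderiv i p := by
  unfold dirDeriv
  rw [Finset.sum_eq_single i (fun j _ hj => by rw [Pi.single_eq_of_ne hj, zero_smul])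
    (fun hni => absurd (Finset.mem_univ i) hni)]
  rw [Pi.single_eq_same, one_smul]

lemma foldr_single (l : List (Fin g)) (p : MvPolynomial (Fin g) ℂ) :
    (l.map fun i => Pi.single i (1:ℂ)).foldr dirDeriv p
      = l.foldr (fun i q => pderiv i q) p := by
  induction l with
  | nil => rfl
  | cons i l ih => simp only [List.map_cons, List.foldr_cons, ih, dirDeriv_single]

lemma foldr_isHomogeneous {p : MvPolynomial (Fin g) ℂ} {n : ℕ} (hp : p.IsHomogeneous n)
    (l : List (Fin g)) :
    (l.foldr (fun i q => pderiv i q) p).IsHomogeneous (n - l.length) := by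
  induction l with
  | nil => simpa using hp
  | cons i l ih =>
    have := pderiv_isHomogeneous ih i
    simpa [List.length_cons, Nat.sub_sub] using this

lemma exists_chain {p : MvPolynomial (Fin g) ℂ} {n : ℕ} (hp : p.IsHomogeneous n) (hne : p ≠ 0) :
    ∀ k, k ≤ n → ∃ l : List (Fin g), l.length = k ∧ l.foldr (fun i q => pderiv i q) p ≠ 0 := by
  intro k
  induction k with
  | zero => exact fun _ => ⟨[], rfl, hne⟩
  | succ k ih =>
    intro hk
    obtain ⟨l, hlen, hne'⟩ := ih (Nat.le_of_succ_le hk)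
    have hhom := foldr_isHomogeneous hp l
    rw [hlen] at hhom
    obtain ⟨i, hi⟩ := exists_pderiv_ne_zero (n := n - k) (by omega) hhom hne'
    exact ⟨i :: l, by simp [hlen], by simpa using hi⟩

end PolarAux

open MvPolynomial PolarAux

/-- Let `s ≥ 1`, `d ≥ 3`, and `f` a nonzero homogeneous polynomial of
degree `d` in `z₀, …, z_s` over `ℂ`.  If all polar quadrics of `f` coincide, i.e. there
is a nonzero quadratic form `q` such that every iterated directional derivative
`∂_{b₁}⋯∂_{b_{d−2}} f` is a scalar multiple of `q`, then `f = c·ℓ^d` for a nonzero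
linear form `ℓ` and `c ≠ 0`, and every nonzero polar quadric of `f` is a nonzero scalar
multiple of `ℓ²`. -/
theorem polar_quadrics_coincide (s d : ℕ) (hs : 1 ≤ s) (hd : 3 ≤ d)
    (f : MvPolynomial (Fin (s + 1)) ℂ) (hf : f ≠ 0) (hhom : f.IsHomogeneous d)
    (q : MvPolynomial (Fin (s + 1)) ℂ) (hq : q ≠ 0) (hq2 : q.IsHomogeneous 2)
    (hpolar : ∀ bs : List (Fin (s + 1) → ℂ), bs.length = d - 2 →
      ∃ c : ℂ, bs.foldr dirDeriv f = c • q) :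
    ∃ (L : MvPolynomial (Fin (s + 1)) ℂ) (c : ℂ),
      L ≠ 0 ∧ L.IsHomogeneous 1 ∧ c ≠ 0 ∧ f = c • L ^ d ∧
      ∀ bs : List (Fin (s + 1) → ℂ), bs.length = d - 2 → bs.foldr dirDeriv f ≠ 0 →
        ∃ e : ℂ, e ≠ 0 ∧ bs.foldr dirDeriv f = e • L ^ 2 := by
  have hpolarIdx : ∀ l : List (Fin (s+1)), l.length = d - 2 →
      ∃ c : ℂ, l.foldr (fun i p => pderiv i p) f = c • q := by
    intro l hl
    obtain ⟨c, hc⟩ := hpolar (l.map fun i => Pi.single i 1) (by simpa using hl)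
    rw [foldr_single] at hc
    exact ⟨c, hc⟩
  -- find a nonvanishing chain of derivatives of length d - 2
  obtain ⟨l, hlen, hlne⟩ := exists_chain hhom hf (d - 2) (by omega)
  obtain ⟨i₀, l', rfl⟩ : ∃ i₀ l', l = i₀ :: l' := by
    cases l with
    | nil => exfalso; simp at hlen; omega
    | cons a b => exact ⟨a, b, rfl⟩
  set h₃ := l'.foldr (fun i p => pderiv i p) f with hh₃
  have hAll : ∀ i : Fin (s+1), ∃ ci : ℂ, pderiv i h₃ = ci • q := by
    intro i
    obtain ⟨ci, hci⟩ := hpolarIdx (i :: l') (by simp at hlen ⊢; omega)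
    exact ⟨ci, by simpa using hci⟩
  choose c hc using hAll
  have hc0 : c i₀ ≠ 0 := by
    intro hz
    apply hlne
    have := hc i₀
    rw [hz, zero_smul] at this
    simpa using this
  obtain ⟨m, lam, hm1, hmne, hlamne, hq_eq⟩ := q_is_square hq2 hq c hc i₀ hc0
  have hmain : ∃ cf : ℂ, f = cf • m ^ d := by
    apply key_induction hm1 hmne d (by omega) f hhom
    intro l hl
    obtain ⟨c', hc'⟩ := hpolarIdx l hl
    exact ⟨c' * lam, by rw [hc', hq_eq, smul_smul]⟩
  obtain ⟨cf, hcf⟩ := hmain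
  have hcfne : cf ≠ 0 := by
    intro hz
    apply hf
    rw [hcf, hz, zero_smul]
  refine ⟨m, cf, hmne, hm1, hcfne, hcf, ?_⟩
  intro bs hbslen hbsne
  obtain ⟨e', he'⟩ := hpolar bs hbslen
  have he'ne : e' ≠ 0 := by
    intro hz
    apply hbsne
    rw [he', hz, zero_smul]
  exact ⟨e' * lam, mul_ne_zero he'ne hlamne, by rw [he', hq_eq, smul_smul]⟩
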